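/- Every connected bipartite false-twin-free graph on n ≥ 4 vertices has at least ⌈n/2⌉ bicliques. -/

import Mathlib

/-- A set of vertices inducing a complete bipartite subgraph (both sides nonempty). -/
def IsCompleteBipartiteSet {V : Type*} (G : SimpleGraph V) (B : Set V) : Prop :=
  ∃ X Y : Set V, X.Nonempty ∧ Y.Nonempty ∧ Disjoint X Y ∧ B = X ∪ Y ∧
    (∀ x ∈ X, ∀ y ∈ Y, G.Adj x y) ∧
    (∀ x ∈ X, ∀ x' ∈ X, ¬ G.Adj x x') ∧
    (∀ y ∈ Y, ∀ y' ∈ Y, ¬ G.Adj y y')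

/-- A biclique: a maximal set of vertices inducing a complete bipartite subgraph. -/
def IsBiclique {V : Type*} (G : SimpleGraph V) (B : Set V) : Prop :=
  IsCompleteBipartiteSet G B ∧
    ∀ B' : Set V, IsCompleteBipartiteSet G B' → B ⊆ B' → B' = B

/-- A vertex set that is a star: a center `c` adjacent to all other vertices of the set,
which are nonempty and pairwise non-adjacent (shape `K_{1,r}`, `r ≥ 1`). -/
def IsStarSet {V : Type*} (G : SimpleGraph V) (B : Set V) : Prop :=
  ∃ c ∈ B, (B \ {c}).Nonempty ∧ (∀ w ∈ B, w ≠ c → G.Adj c w) ∧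
    (∀ w ∈ B, ∀ z ∈ B, w ≠ c → z ≠ c → ¬ G.Adj w z)

/-- A graph is false-twin-free if no two distinct vertices have equal open neighborhoods. -/
def FalseTwinFree {V : Type*} (G : SimpleGraph V) : Prop :=
  ∀ u v : V, G.neighborSet u = G.neighborSet v → u = v

section Aux

variable {V : Type*} (G : SimpleGraph V)

/-- the canonical biclique generated by the neighborhood of `v`. -/
def genBic (v : V) : Set V :=
  {u | G.neighborSet v ⊆ G.neighborSet u} ∪ G.neighborSet v

variable {G}

lemma exists_adj_of_connected [Fintype V] (hconn : G.Connected)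
    (hn : 2 ≤ Fintype.card V) (v : V) : ∃ w, G.Adj v w := by
  obtain ⟨u, hu⟩ := Fintype.exists_ne_of_one_lt_card (by omega) v
  obtain ⟨p⟩ := hconn v u
  cases p with
  | nil => exact absurd rfl hu.symm
  | cons h _ => exact ⟨_, h⟩

lemma genBic_isBiclique (C : G.Coloring (Fin 2)) (v : V)
    (hne : (G.neighborSet v).Nonempty) : IsBiclique G (genBic G v) := by
  obtain ⟨w0, hw0⟩ := hne
  constructor
  · refine ⟨{u | G.neighborSet v ⊆ G.neighborSet u}, G.neighborSet v,
      ⟨v, fun _ h => h⟩, ⟨w0, hw0⟩, ?_, rfl, ?_, ?_, ?_⟩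
    · rw [Set.disjoint_left]
      intro u hu hu'
      exact G.irrefl (hu hu')
    · exact fun x hx y hy => hx hy
    · intro x hx x' hx' hadj
      have h1 : C x ≠ C w0 := C.valid (hx hw0)
      have h2 : C x' ≠ C w0 := C.valid (hx' hw0)
      have h3 : C x ≠ C x' := C.valid hadj
      exact (by decide : ∀ a b c : Fin 2, a ≠ b → c ≠ b → a ≠ c → False) _ _ _ h1 h2 h3
    · intro y hy y' hy' hadj
      have h1 : C v ≠ C y := C.valid hy
      have h2 : C v ≠ C y' := C.valid hy'
      have h3 : C y ≠ C y' := C.valid hadj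
      exact (by decide : ∀ a b c : Fin 2, a ≠ b → c ≠ b → a ≠ c → False) _ _ _ (h1.symm) (h2.symm) h3
  · rintro B' ⟨X, Y, hX, hY, hdisj, rfl, hadjXY, hXX, hYY⟩ hsub
    have hNsub : G.neighborSet v ⊆ X ∪ Y := fun w hw => hsub (Or.inr hw)
    have hv : v ∈ X ∪ Y := hsub (Or.inl (fun _ h => h))
    apply Set.Subset.antisymm _ hsub
    rcases hv with hvX | hvY
    · rintro z (hzX | hzY)
      · left
        intro w hw
        rcases hNsub hw with hwX | hwY
        · exact absurd hw (hXX v hvX w hwX)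
        · exact hadjXY z hzX w hwY
      · exact Or.inr (hadjXY v hvX z hzY)
    · rintro z (hzX | hzY)
      · exact Or.inr (hadjXY z hzX v hvY).symm
      · left
        intro w hw
        rcases hNsub hw with hwX | hwY
        · exact (hadjXY w hwX z hzY).symm
        · exact absurd hw (hYY v hvY w hwY)

end Aux

/-- Every connected bipartite false-twin-free graph on n ≥ 4 vertices has at least
⌈n/2⌉ bicliques. -/
theorem bicliques_lower_bound_bipartite {V : Type*} [Fintype V] (G : SimpleGraph V)
    (hconn : G.Connected) (hn : 4 ≤ Fintype.card V)
    (hbip : G.Colorable 2) (htf : FalseTwinFree G) :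
    (Fintype.card V + 1) / 2 ≤ {B : Set V | IsBiclique G B}.ncard := by
  classical
  obtain ⟨C⟩ := hbip
  have hne : ∀ v : V, (G.neighborSet v).Nonempty := fun v => by
    obtain ⟨w, hw⟩ := exists_adj_of_connected hconn (by omega) v
    exact ⟨w, hw⟩
  -- the pairing map is injective
  have hinj : Function.Injective (fun v : V => (genBic G v, C v)) := by
    intro u v h
    simp only [Prod.mk.injEq] at h
    obtain ⟨hB, hC⟩ := h
    apply htf
    have huv : u ∈ genBic G v := hB ▸ Or.inl (fun _ h => h)
    have hvu : v ∈ genBic G u := hB ▸ Or.inl (fun _ h => h)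
    have h1 : G.neighborSet v ⊆ G.neighborSet u := by
      rcases huv with h | h
      · exact h
      · exact absurd hC (C.valid (G.adj_symm h))
    have h2 : G.neighborSet u ⊆ G.neighborSet v := by
      rcases hvu with h | h
      · exact h
      · exact absurd hC.symm (C.valid (G.adj_symm h))
    exact Set.Subset.antisymm h2 h1
  set T : Finset (Set V) := Finset.univ.image (genBic G) with hT
  have himg : (Finset.univ.image (fun v : V => (genBic G v, C v))).card = Fintype.card V := by
    rw [Finset.card_image_of_injective _ hinj, Finset.card_univ]
  have hsub2 : Finset.univ.image (fun v : V => (genBic G v, C v)) ⊆ T ×ˢ Finset.univ := by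
    intro p hp
    simp only [Finset.mem_image, Finset.mem_univ, true_and] at hp
    obtain ⟨v, rfl⟩ := hp
    simp [hT, Finset.mem_product]
  have hcard : Fintype.card V ≤ T.card * 2 := by
    calc Fintype.card V = _ := himg.symm
    _ ≤ (T ×ˢ (Finset.univ : Finset (Fin 2))).card := Finset.card_le_card hsub2
    _ = T.card * 2 := by rw [Finset.card_product]; simp
  have hTsub : (T : Set (Set V)) ⊆ {B : Set V | IsBiclique G B} := by
    intro B hB
    simp only [hT, Finset.coe_image, Finset.coe_univ, Set.image_univ, Set.mem_range] at hB
    obtain ⟨v, rfl⟩ := hB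
    exact genBic_isBiclique C v (hne v)
  have := Set.ncard_le_ncard hTsub (Set.toFinite _)
  rw [Set.ncard_coe_finset] at this
  omega
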